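/- Graph reduction for compound channels preserves shortest cycles: let V = {(k, l_k) : k ∈ ⟨K⟩, l_k ∈ ⟨L_k⟩} ∪ {u} with edge lengths l((k,l_k),(k,l_k')) = 0, l((k,l_k),(j,l_j)) = (α_{kk}^{[l_k]} − α_{kj}^{[l_k]}) − d_k for j ≠ k, l((k,l_k),u) = α_{kk}^{[l_k]} − d_k, l(u,(k,l_k)) = 0; and let V̄ = ⟨K⟩ ∪ {u} with l̄(k,j) = min_{l_k}(α_{kk}^{[l_k]} − α_{kj}^{[l_k]}) − d_k for j ≠ k, l̄(k,u) = min_{l_k} α_{kk}^{[l_k]} − d_k, l̄(u,k) = 0. Then every directed cycle in the first graph has nonnegative length if and only if every directed cycle in the second graph has nonnegative length. -/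

import Mathlib

section Aux

variable {K : ℕ} {S : Fin K → Type} [∀ k, Fintype (S k)] [∀ k, Nonempty (S k)]

/-- A minimizer of a real function on a finite nonempty type. -/
noncomputable def argmin (f : (k : Fin K) → S k → ℝ) (k : Fin K) : S k := by
  classical
  exact (Finset.exists_min_image Finset.univ (f k) Finset.univ_nonempty).choose

lemma argmin_spec (f : (k : Fin K) → S k → ℝ) (k : Fin K) (y : S k) :
    f k (argmin f k) ≤ f k y := by
  classical
  exact (Finset.exists_min_image Finset.univ (f k) Finset.univ_nonempty).choose_spec.2 y
    (Finset.mem_univ y)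

lemma ciInf_eq_argmin (f : (k : Fin K) → S k → ℝ) (k : Fin K) :
    (⨅ lk : S k, f k lk) = f k (argmin f k) :=
  le_antisymm (ciInf_le (Set.finite_range (f k)).bddBelow _)
    (le_ciInf (argmin_spec f k))

/-- A state selected for vertex `k`, adapted to the target vertex. -/
noncomputable def pick (α : (k : Fin K) → S k → Fin K → ℝ) (k : Fin K) :
    Fin K ⊕ Unit → S k
  | .inl j => if k = j then Classical.arbitrary (S k)
      else argmin (fun k' lk => α k' lk k' - α k' lk j) k
  | .inr _ => argmin (fun k' lk => α k' lk k') k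

/-- Lift of a vertex of the reduced graph, adapted to a target vertex. -/
noncomputable def liftV (α : (k : Fin K) → S k → Fin K → ℝ) :
    (Fin K ⊕ Unit) → (Fin K ⊕ Unit) → ((Σ k : Fin K, S k) ⊕ Unit)
  | .inl k, t => .inl ⟨k, pick α k t⟩
  | .inr _, _ => .inr ()

/-- Projection of the big graph onto the reduced graph. -/
def projV : ((Σ k : Fin K, S k) ⊕ Unit) → Fin K ⊕ Unit
  | .inl ⟨k, _⟩ => .inl k
  | .inr _ => .inr ()

lemma projV_liftV (α : (k : Fin K) → S k → Fin K → ℝ) (v t : Fin K ⊕ Unit) :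
    projV (liftV α v t) = v := by
  cases v with
  | inl k => rfl
  | inr u => cases u; rfl

end Aux

theorem compound_regular_graph_reduction
    (K : ℕ) (hK : 1 ≤ K) (S : Fin K → Type) [∀ k, Fintype (S k)] [∀ k, Nonempty (S k)]
    (α : (k : Fin K) → S k → Fin K → ℝ) (d : Fin K → ℝ)
    (len1 : ((Σ k : Fin K, S k) ⊕ Unit) → ((Σ k : Fin K, S k) ⊕ Unit) → ℝ)
    (len2 : (Fin K ⊕ Unit) → (Fin K ⊕ Unit) → ℝ)
    (h1a : ∀ (k : Fin K) (lk lk' : S k), len1 (.inl ⟨k, lk⟩) (.inl ⟨k, lk'⟩) = 0)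
    (h1b : ∀ (k j : Fin K) (lk : S k) (lj : S j), k ≠ j →
      len1 (.inl ⟨k, lk⟩) (.inl ⟨j, lj⟩) = (α k lk k - α k lk j) - d k)
    (h1c : ∀ (k : Fin K) (lk : S k), len1 (.inl ⟨k, lk⟩) (.inr ()) = α k lk k - d k)
    (h1d : ∀ (k : Fin K) (lk : S k), len1 (.inr ()) (.inl ⟨k, lk⟩) = 0)
    (h1e : len1 (.inr ()) (.inr ()) = 0)
    (h2a : ∀ k : Fin K, len2 (.inl k) (.inl k) = 0)
    (h2b : ∀ k j : Fin K, k ≠ j →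
      len2 (.inl k) (.inl j) = (⨅ lk : S k, (α k lk k - α k lk j)) - d k)
    (h2c : ∀ k : Fin K, len2 (.inl k) (.inr ()) = (⨅ lk : S k, α k lk k) - d k)
    (h2d : ∀ k : Fin K, len2 (.inr ()) (.inl k) = 0)
    (h2e : len2 (.inr ()) (.inr ()) = 0) :
    (∀ (m : ℕ) (c : Fin (m + 1) → ((Σ k : Fin K, S k) ⊕ Unit)), c 0 = c (Fin.last m) →
        0 ≤ ∑ i : Fin m, len1 (c i.castSucc) (c i.succ)) ↔
    (∀ (m : ℕ) (c : Fin (m + 1) → (Fin K ⊕ Unit)), c 0 = c (Fin.last m) →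
        0 ≤ ∑ i : Fin m, len2 (c i.castSucc) (c i.succ)) := by
  classical
  -- key lemma 1: the lifted edge has exactly the reduced length
  have key1 : ∀ (v : Fin K ⊕ Unit) (x : (Σ k : Fin K, S k) ⊕ Unit),
      len1 (liftV α v (projV x)) x = len2 v (projV x) := by
    rintro (k | u) (⟨j, lj⟩ | u')
    · -- v = inl k, x = inl ⟨j, lj⟩
      show len1 (.inl ⟨k, pick α k (.inl j)⟩) (.inl ⟨j, lj⟩) = len2 (.inl k) (.inl j)
      by_cases hkj : k = j
      · subst hkj
        rw [h1a, h2a]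
      · rw [h1b _ _ _ _ hkj, h2b _ _ hkj,
          ciInf_eq_argmin (fun k' lk => α k' lk k' - α k' lk j) k]
        simp only [pick, if_neg hkj]
    · cases u'
      show len1 (.inl ⟨k, pick α k (.inr ())⟩) (.inr ()) = len2 (.inl k) (.inr ())
      rw [h1c, h2c, ciInf_eq_argmin (fun k' lk => α k' lk k') k]
      rfl
    · cases u
      show len1 (.inr ()) (.inl ⟨j, lj⟩) = len2 (.inr ()) (.inl j)
      rw [h1d, h2d]
    · cases u; cases u'
      show len1 (.inr ()) (.inr ()) = len2 (.inr ()) (.inr ())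
      rw [h1e, h2e]
  -- key lemma 2: the projected edge is at most the original length
  have key2 : ∀ a b : (Σ k : Fin K, S k) ⊕ Unit,
      len2 (projV a) (projV b) ≤ len1 a b := by
    rintro (⟨k, lk⟩ | u) (⟨j, lj⟩ | u')
    · show len2 (.inl k) (.inl j) ≤ len1 (.inl ⟨k, lk⟩) (.inl ⟨j, lj⟩)
      by_cases hkj : k = j
      · subst hkj
        rw [h1a, h2a]
      · rw [h1b _ _ _ _ hkj, h2b _ _ hkj]
        have := ciInf_le (Set.finite_range (fun lk' : S k => α k lk' k - α k lk' j)).bddBelow lk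
        linarith
    · cases u'
      show len2 (.inl k) (.inr ()) ≤ len1 (.inl ⟨k, lk⟩) (.inr ())
      rw [h1c, h2c]
      have := ciInf_le (Set.finite_range (fun lk' : S k => α k lk' k)).bddBelow lk
      linarith
    · cases u
      show len2 (.inr ()) (.inl j) ≤ len1 (.inr ()) (.inl ⟨j, lj⟩)
      rw [h1d, h2d]
    · cases u; cases u'
      show len2 (.inr ()) (.inr ()) ≤ len1 (.inr ()) (.inr ())
      rw [h1e, h2e]
  constructor
  · -- lift cycles
    intro h1 m c hc
    rcases Nat.eq_zero_or_pos m with rfl | hm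
    · simp
    set nxt : Fin (m + 1) → Fin (m + 1) :=
      fun i => if h : (i : ℕ) < m then ⟨i + 1, by omega⟩ else ⟨1, by omega⟩ with hnxt
    set f : Fin (m + 1) → ((Σ k : Fin K, S k) ⊕ Unit) :=
      fun i => liftV α (c i) (c (nxt i)) with hf
    have hf0 : f 0 = f (Fin.last m) := by
      have h0 : nxt 0 = ⟨1, by omega⟩ := by simp [hnxt, hm]
      have hl : nxt (Fin.last m) = ⟨1, by omega⟩ := by simp [hnxt, Fin.last]
      simp only [hf, h0, hl, hc]
    have hterm : ∀ i : Fin m,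
        len1 (f i.castSucc) (f i.succ) = len2 (c i.castSucc) (c i.succ) := by
      intro i
      have hcast : nxt i.castSucc = i.succ := by
        have : ((i.castSucc : Fin (m+1)) : ℕ) < m := i.isLt
        simp only [hnxt, dif_pos this]
        ext; simp
      have hpr : projV (f i.succ) = c i.succ := projV_liftV α _ _
      calc len1 (f i.castSucc) (f i.succ)
          = len1 (liftV α (c i.castSucc) (projV (f i.succ))) (f i.succ) := by
            rw [hpr]; simp only [hf, hcast]
        _ = len2 (c i.castSucc) (projV (f i.succ)) := key1 _ _
        _ = len2 (c i.castSucc) (c i.succ) := by rw [hpr]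
    calc (0 : ℝ) ≤ ∑ i : Fin m, len1 (f i.castSucc) (f i.succ) := h1 m f hf0
      _ = ∑ i : Fin m, len2 (c i.castSucc) (c i.succ) :=
          Finset.sum_congr rfl fun i _ => hterm i
  · -- project cycles
    intro h2 m c hc
    have := h2 m (fun i => projV (c i)) (by rw [hc])
    calc (0 : ℝ) ≤ ∑ i : Fin m, len2 (projV (c i.castSucc)) (projV (c i.succ)) := this
      _ ≤ ∑ i : Fin m, len1 (c i.castSucc) (c i.succ) :=
          Finset.sum_le_sum fun i _ => key2 _ _
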